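/- Let H be a transition system with states X × S, initial set Θ × {s_init}, and transitions given by flows and mode switches, and let H_v be its symmetry abstraction determined by maps {(γ_s, ρ_s)}. Define R ⊆ (X × S) × (X × S_v) by (x, s) R (x_v, s_v) iff x_v = γ_s(x) and s_v = rv(s), where rv(s) = ρ_s(s). If for every reachable abstract mode s_v, Reach_{H_v}(s_v) ∩ O_v(s_v) = ∅, where O_v(s_v) = ⋃_{s : rv(s) = s_v} γ_s(O(s)), then for every concrete mode s, Reach_H(s) ∩ O(s) = ∅. -/
import Mathlib


/-- A transition system: states, initial states, and a transition relation. -/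
structure TransSys (σ : Type*) where
  init : Set σ
  step : σ → σ → Prop

/-- Reachability in a transition system. -/
def TransSys.Reachable {σ : Type*} (A : TransSys σ) (a : σ) : Prop :=
  ∃ a₀ ∈ A.init, Relation.ReflTransGen A.step a₀ a

/-- Forward simulation relation. -/
def IsForwardSim {σ τ : Type*} (A : TransSys σ) (B : TransSys τ) (R : σ → τ → Prop) : Prop :=
  (∀ a ∈ A.init, ∃ b ∈ B.init, R a b) ∧
  (∀ a b a', R a b → A.step a a' → ∃ b', B.step b b' ∧ R a' b')

lemma sim_reach {σ τ : Type*} (A : TransSys σ) (B : TransSys τ) (R : σ → τ → Prop)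
    (hsim : IsForwardSim A B R) {a : σ} (ha : A.Reachable a) :
    ∃ b, B.Reachable b ∧ R a b := by
  obtain ⟨a₀, ha₀, hsteps⟩ := ha
  induction hsteps with
  | refl =>
    obtain ⟨b, hb, hR⟩ := hsim.1 a₀ ha₀
    exact ⟨b, ⟨b, hb, .refl⟩, hR⟩
  | tail _ hstep ih =>
    obtain ⟨b, ⟨b₀, hb₀, hbsteps⟩, hR⟩ := ih
    obtain ⟨b', hb', hR'⟩ := hsim.2 _ _ _ hR hstep
    exact ⟨b', ⟨b₀, hb₀, hbsteps.tail hb'⟩, hR'⟩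

/-- Let `H` be the concrete hybrid automaton, viewed as a transition system on
`X × S` with initial set `Θ × {s_init}`, and `H_v` its symmetry abstraction, with
`R (x, s) (x_v, s_v) ↔ x_v = γ_s x ∧ s_v = rv s` a forward simulation from `H` to `H_v`.
If for every abstract mode `s_v`, `Reach_{H_v}(s_v) ∩ O_v(s_v) = ∅`, where
`O_v(s_v) = ⋃_{s : rv s = s_v} γ_s '' O(s)`, then for every concrete mode `s`,
`Reach_H(s) ∩ O(s) = ∅`. -/
theorem stmt6 {X S Sv : Type*}
    (γ : S → X → X) (rv : S → Sv)
    (Θ : Set X) (sinit : S)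
    (H : TransSys (X × S)) (Hv : TransSys (X × Sv))
    (hinit : H.init = Θ ×ˢ ({sinit} : Set S))
    (O : S → Set X)
    (Ov : Sv → Set X)
    (hOv : ∀ sv, Ov sv = ⋃ s ∈ {s : S | rv s = sv}, γ s '' O s)
    (R : X × S → X × Sv → Prop)
    (hRdef : ∀ x s xv sv, R (x, s) (xv, sv) ↔ xv = γ s x ∧ sv = rv s)
    (hsim : IsForwardSim H Hv R)
    (hsafe : ∀ sv : Sv, {x | Hv.Reachable (x, sv)} ∩ Ov sv = ∅) :
    ∀ s : S, {x | H.Reachable (x, s)} ∩ O s = ∅ := by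
  intro s
  ext x
  simp only [Set.mem_inter_iff, Set.mem_empty_iff_false, iff_false, not_and]
  intro hreach hO
  obtain ⟨⟨xv, sv⟩, hbreach, hR⟩ := sim_reach H Hv R hsim hreach
  obtain ⟨hx, hs⟩ := (hRdef x s xv sv).mp hR
  have : xv ∈ Ov sv := by
    rw [hOv]
    exact Set.mem_biUnion (show s ∈ {s : S | rv s = sv} from hs.symm) ⟨x, hO, hx.symm⟩
  exact Set.eq_empty_iff_forall_notMem.mp (hsafe sv) xv ⟨hbreach, this⟩
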